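/- The rank-3 lattice with Gram matrix [[6,0,0],[0,-4,2],[0,2,-4]] does not represent -2; i.e., there is no integer solution to 6a² - 4b² - 4c² + 4bc = -2. -/
import Mathlib

/-- The rank-3 lattice with Gram matrix `[[6,0,0],[0,-4,2],[0,2,-4]]` does not
represent -2: there is no integer solution to `6a² - 4b² - 4c² + 4bc = -2`. -/
theorem Jnonsyz_does_not_represent_neg_two :
    ¬ ∃ a b c : ℤ, 6 * a ^ 2 - 4 * b ^ 2 - 4 * c ^ 2 + 4 * b * c = -2 := by
  rintro ⟨a, b, c, h⟩
  have h8 : (6 * (a : ZMod 16) ^ 2 - 4 * (b : ZMod 16) ^ 2 - 4 * (c : ZMod 16) ^ 2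
      + 4 * (b : ZMod 16) * (c : ZMod 16) : ZMod 16) = -2 := by
    exact_mod_cast congrArg (Int.cast : ℤ → ZMod 16) h
  revert h8
  generalize (a : ZMod 16) = x
  generalize (b : ZMod 16) = y
  generalize (c : ZMod 16) = z
  revert x y z
  decide
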